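/- Under the hypotheses of the U(1) × U(n−1) reduction (TM = L ⊕ E, F|_E = (k/4)Id), the Ricci tensor of g has exactly two eigenvalues: k(n+7)/8 on L and k(n+2)/4 on E. -/
import Mathlib


open RealInnerProductSpace

/-
Setting of the `U(1) × U(n−1)` reduction of a strict nearly Kähler manifold
`(M^{2n}, g, J)` (see the previous statement): `TM = L ⊕ E` is the
`∇̄`-parallel orthogonal `J`-stable splitting with `rank L = 2`,
`A x y = (∇_x J) y`, the tensor `r` has eigenvalue `k(n−1)/2` on `L` and `k`
on `E`, `F|_E = (k/4)·Id`, `(∇_X J)Y ∈ L` for `X,Y ∈ E`, and on each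
eigenbundle `E_i` of `r` the Ricci tensor satisfies
`Ric(X,Y) = (λ_i/4)⟨X,Y⟩ + (1/λ_i) Σ_s λ_s ⟨r^s X,Y⟩`, where the partial
tensors `r^L, r^E` are the traces over `L` resp. `E`; moreover `Ric`
vanishes across the two eigenbundles.

STATEMENT (Corollary 4.1 (ii)): the Ricci tensor of `g` has exactly two
eigenvalues, `k(n+7)/8` with eigenbundle `L` and `k(n+2)/4` with
eigenbundle `E`.
-/
theorem reducibleNK_Ricci_eigenvalues
    (V : Type) [NormedAddCommGroup V] [InnerProductSpace ℝ V]
    [FiniteDimensional ℝ V]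
    (n : ℕ) (hdim : Module.finrank ℝ V = 2 * n)
    (b : OrthonormalBasis (Fin (2 * n)) ℝ V)
    (J : V →ₗ[ℝ] V)
    (A : V →ₗ[ℝ] V →ₗ[ℝ] V)
    (r F Ric : V →ₗ[ℝ] V)
    (L E : Submodule ℝ V)
    -- almost Hermitian structure, strict nearly Kähler condition
    (hJJ : ∀ x, J (J x) = -x)
    (hJiso : ∀ x y, ⟪J x, J y⟫ = ⟪x, y⟫)
    (hNK : ∀ x, A x x = 0)
    (hstrict : ∀ x, x ≠ 0 → ∃ y, A x y ≠ 0)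
    (hAskew : ∀ x y z, ⟪A x y, z⟫ = -⟪A x z, y⟫)
    (hAJ : ∀ x y, A x (J y) = -J (A x y))
    -- the splitting TM = L ⊕ E : orthogonal, J-stable, rank L = 2
    (hcompl : IsCompl L E)
    (horth : ∀ v ∈ L, ∀ x ∈ E, ⟪v, x⟫ = 0)
    (hJL : ∀ v ∈ L, J v ∈ L) (hJE : ∀ x ∈ E, J x ∈ E)
    (hrankL : Module.finrank ℝ L = 2)
    -- the frame is adapted to the splitting
    (inL : Fin (2 * n) → Prop) [DecidablePred inL]
    (hadapt : ∀ i, if inL i then b i ∈ L else b i ∈ E)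
    -- definition of r and F, structural facts from Proposition 4.1
    (hr : ∀ x y, ⟪r x, y⟫ = ∑ i, ⟪A (b i) x, A (b i) y⟫)
    (hF : ∀ x y, ⟪F x, y⟫
      = -(1/2 : ℝ) * ∑ i ∈ Finset.univ.filter inL, ⟪A x (A y (b i)), b i⟫)
    (k : ℝ) (hk : 0 < k)
    (hFE : ∀ x ∈ E, F x = (k / 4) • x)
    (hAE : ∀ x ∈ E, ∀ y ∈ E, A x y ∈ L)
    -- the eigenvalues of r on L and E
    (hrL : ∀ v ∈ L, r v = (k * (n - 1) / 2) • v)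
    (hrE : ∀ x ∈ E, r x = k • x)
    -- the partial trace tensors r^L and r^E
    (rL rE : V →ₗ[ℝ] V)
    (hrsL : ∀ x y, ⟪rL x, y⟫
      = -∑ i ∈ Finset.univ.filter inL, ⟪A x (A y (b i)), b i⟫)
    (hrsE : ∀ x y, ⟪rE x, y⟫
      = -∑ i ∈ Finset.univ.filter (fun i => ¬ inL i), ⟪A x (A y (b i)), b i⟫)
    -- the Ricci formula on each eigenbundle of r, and vanishing across them
    (hRicL : ∀ x ∈ L, ∀ y ∈ L,
      ⟪Ric x, y⟫ = (k * (n - 1) / 2) / 4 * ⟪x, y⟫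
        + (1 / (k * (n - 1) / 2)) *
            ((k * (n - 1) / 2) * ⟪rL x, y⟫ + k * ⟪rE x, y⟫))
    (hRicE : ∀ x ∈ E, ∀ y ∈ E,
      ⟪Ric x, y⟫ = k / 4 * ⟪x, y⟫
        + (1 / k) * ((k * (n - 1) / 2) * ⟪rL x, y⟫ + k * ⟪rE x, y⟫))
    (hRic0 : ∀ x ∈ L, ∀ y ∈ E, ⟪Ric x, y⟫ = 0)
    (hRicsymm : ∀ x y, ⟪Ric x, y⟫ = ⟪x, Ric y⟫) :
    (∀ v ∈ L, Ric v = (k * (n + 7) / 8) • v)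
    ∧ (∀ x ∈ E, Ric x = (k * (n + 2) / 4) • x) := by

  -- A is antisymmetric in its two arguments
  have hanti : ∀ x y, A x y = - A y x := by
    intro x y
    have h := hNK (x + y)
    simp only [map_add, LinearMap.add_apply, hNK, zero_add, add_zero] at h
    exact eq_neg_of_add_eq_zero_right h
  -- A vanishes on L × L
  have hALL : ∀ v ∈ L, ∀ w ∈ L, A v w = 0 := by
    intro v hv w hw
    rcases eq_or_ne v 0 with rfl | hv0
    · simp
    have hJv : J v ∈ L := hJL v hv
    have hJv0 : J v ≠ 0 := by
      intro h
      apply hv0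
      have h2 := hJJ v
      rw [h, map_zero] at h2
      simpa using h2.symm
    have hvJv : ⟪v, J v⟫ = 0 := by
      have h1 : ⟪J v, J (J v)⟫ = ⟪v, J v⟫ := hJiso v (J v)
      rw [hJJ v, inner_neg_right, real_inner_comm] at h1
      linarith
    have hli : LinearIndependent ℝ ![v, J v] := by
      rw [LinearIndependent.pair_iff]
      intro s t hst
      have h1 : ⟪v, s • v + t • J v⟫ = 0 := by rw [hst, inner_zero_right]
      rw [inner_add_right, real_inner_smul_right, real_inner_smul_right, hvJv,
        mul_zero, add_zero] at h1
      have hvv : ⟪v, v⟫ ≠ 0 := fun h => hv0 (inner_self_eq_zero.mp h)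
      have hs : s = 0 := by
        rcases mul_eq_zero.mp h1 with h | h
        · exact h
        · exact absurd h hvv
      subst hs
      rw [zero_smul, zero_add] at hst
      rcases smul_eq_zero.mp hst with h | h
      · exact ⟨rfl, h⟩
      · exact absurd h hJv0
    have hle : Submodule.span ℝ {v, J v} ≤ L := by
      rw [Submodule.span_le]
      intro x hx
      rcases hx with rfl | hx
      · exact hv
      · rcases hx with rfl
        exact hJv
    have hrank : Module.finrank ℝ (Submodule.span ℝ {v, J v}) = 2 := by
      have hr2 := finrank_span_eq_card hli
      have : Set.range ![v, J v] = {v, J v} := by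
        ext x
        simp [Matrix.range_cons, Matrix.range_empty]
        tauto
      rw [this] at hr2
      simpa using hr2
    have hspan : Submodule.span ℝ {v, J v} = L :=
      Submodule.eq_of_le_of_finrank_le hle (by rw [hrank, hrankL])
    have hw' : w ∈ Submodule.span ℝ {v, J v} := hspan ▸ hw
    obtain ⟨a, c, hac⟩ := Submodule.mem_span_pair.mp hw'
    rw [← hac]
    simp [map_add, map_smul, hAJ, hNK]
  -- rewriting sums of the form ∑ ⟪A x (A y bᵢ), bᵢ⟫
  have hterm : ∀ (x y : V) (i : Fin (2 * n)),
      ⟪A x (A y (b i)), b i⟫ = -⟪A (b i) x, A (b i) y⟫ := by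
    intro x y i
    rw [hAskew, hanti x (b i), hanti y (b i), inner_neg_neg]
  -- rL + rE = r at the level of inner products
  have hrtot : ∀ x y, ⟪rL x, y⟫ + ⟪rE x, y⟫ = ⟪r x, y⟫ := by
    intro x y
    rw [hrsL, hrsE, hr, ← neg_add, Finset.sum_filter_add_sum_filter_not]
    rw [neg_eq_iff_eq_neg, ← Finset.sum_neg_distrib]
    exact Finset.sum_congr rfl fun i _ => hterm x y i
  -- rL on E
  have hrLE : ∀ x ∈ E, ∀ y, ⟪rL x, y⟫ = k / 2 * ⟪x, y⟫ := by
    intro x hx y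
    have h1 := hF x y
    rw [hFE x hx, real_inner_smul_left] at h1
    rw [hrsL]
    nlinarith [h1]
  -- rL against a vector of L vanishes
  have hrLL : ∀ x, ∀ w ∈ L, ⟪rL x, w⟫ = 0 := by
    intro x w hw
    rw [hrsL, neg_eq_zero]
    refine Finset.sum_eq_zero fun i hi => ?_
    have hiL : inL i := (Finset.mem_filter.mp hi).2
    have hbi : b i ∈ L := by have h := hadapt i; rwa [if_pos hiL] at h
    rw [hALL w hw (b i) hbi, map_zero, inner_zero_left]
  -- rE on E
  have hrEE : ∀ x ∈ E, ∀ y, ⟪rE x, y⟫ = k / 2 * ⟪x, y⟫ := by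
    intro x hx y
    have h1 := hrtot x y
    rw [hrLE x hx y, hrE x hx, real_inner_smul_left] at h1
    linarith
  -- rE on L × L
  have hrEL : ∀ v ∈ L, ∀ w ∈ L, ⟪rE v, w⟫ = k * (↑n - 1) / 2 * ⟪v, w⟫ := by
    intro v hv w hw
    have h1 := hrtot v w
    rw [hrLL v w hw, hrL v hv, real_inner_smul_left] at h1
    linarith
  -- n ≥ 2
  have hn2 : 2 ≤ n := by
    by_contra h
    push_neg at h
    interval_cases n
    · have h1 := Submodule.finrank_le L
      rw [hrankL, hdim] at h1
      omega
    · have hLtop : L = ⊤ := Submodule.eq_top_of_finrank_eq (by rw [hrankL, hdim])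
      have hnt : Nontrivial V := Module.finrank_pos_iff.mp (by rw [hdim]; omega)
      obtain ⟨v, hv⟩ := exists_ne (0 : V)
      obtain ⟨y, hy⟩ := hstrict v hv
      exact hy (hALL v (hLtop ▸ Submodule.mem_top) y (hLtop ▸ Submodule.mem_top))
  have hn1 : ((n : ℝ) - 1) ≠ 0 := by
    have : (2 : ℝ) ≤ (n : ℝ) := by exact_mod_cast hn2
    intro h; linarith
  constructor
  · intro v hv
    apply ext_inner_right ℝ
    intro u
    have hu : u ∈ L ⊔ E := by rw [hcompl.sup_eq_top]; trivial
    obtain ⟨a, ha, e, he, rfl⟩ := Submodule.mem_sup.mp hu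
    rw [inner_add_right, inner_add_right, hRic0 v hv e he,
      real_inner_smul_left, real_inner_smul_left, horth v hv e he]
    rw [hRicL v hv a ha, hrLL v a ha, hrEL v hv a ha]
    field_simp [hk.ne', hn1]
    ring
  · intro x hx
    apply ext_inner_right ℝ
    intro u
    have hu : u ∈ L ⊔ E := by rw [hcompl.sup_eq_top]; trivial
    obtain ⟨a, ha, e, he, rfl⟩ := Submodule.mem_sup.mp hu
    have hxa : ⟪Ric x, a⟫ = 0 := by
      rw [hRicsymm, real_inner_comm]
      exact hRic0 a ha x hx
    have hxa0 : ⟪x, a⟫ = 0 := by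
      rw [real_inner_comm]; exact horth a ha x hx
    rw [inner_add_right, inner_add_right, hxa,
      real_inner_smul_left, real_inner_smul_left, hxa0]
    rw [hRicE x hx e he, hrLE x hx e, hrEE x hx e]
    have hk' : k ≠ 0 := ne_of_gt hk
    field_simp
    ring
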